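/- For every x ∈ ℤ² with x ≠ 0, there exists w ∈ X_L with w(0) = 1 and w(x) = -1. -/

import Mathlib

def LedrappierSet : Set ((ℤ × ℤ) → ℤˣ) :=
  {w | ∀ x : ℤ × ℤ, w x * w (x + (1, 0)) * w (x + (0, 1)) = 1}

/-- Parity-relevant extension of binomial coefficients to integer top index. -/
private def ledC (n : ℤ) (k : ℕ) : ℕ :=
  if 0 ≤ n then (n.toNat).choose k else ((-n-1).toNat + k).choose k

private lemma ledC_zero (n : ℤ) : ledC n 0 = 1 := by
  unfold ledC; split <;> simp

private lemma ledC_pascal (n : ℤ) (k : ℕ) :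
    (ledC (n+1) (k+1) : ZMod 2) = ledC n (k+1) + ledC n k := by
  rcases le_or_gt 0 n with h | h
  · have h1 : (0:ℤ) ≤ n + 1 := by omega
    have h2 : (n+1).toNat = n.toNat + 1 := by omega
    simp only [ledC, if_pos h, if_pos h1, h2, Nat.choose_succ_succ]
    push_cast; ring
  · rcases eq_or_lt_of_le (by omega : n ≤ -1) with h1 | h1
    · have hn : n = -1 := by omega
      subst hn
      have e0 : (-1 : ℤ) + 1 = 0 := by ring
      rw [e0]
      simp only [ledC, if_pos (le_refl (0:ℤ)), if_neg (by omega : ¬ (0:ℤ) ≤ -1)]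
      have e1 : ((-(-1:ℤ))-1).toNat = 0 := by omega
      rw [e1, Int.toNat_zero, Nat.zero_add, Nat.zero_add, Nat.choose_self, Nat.choose_self]
      rw [Nat.choose_eq_zero_of_lt (Nat.succ_pos k)]
      decide
    · have h2 : ¬ (0:ℤ) ≤ n := by omega
      have h3 : ¬ (0:ℤ) ≤ n + 1 := by omega
      have h4 : (-n-1).toNat = (-(n+1)-1).toNat + 1 := by omega
      simp only [ledC, if_neg h2, if_neg h3, h4]
      set j := (-(n+1)-1).toNat with hj
      have e1 : j + 1 + (k+1) = (j + (k+1)) + 1 := by ring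
      have e2 : j + 1 + k = j + (k+1) := by ring
      rw [e1, e2, Nat.choose_succ_succ]
      push_cast
      have key : ∀ u v : ZMod 2, u = (v + u) + v := by decide
      exact key _ _

/-- The binomial solution: supported on the left half-plane. -/
private def ledG (p : ℤ × ℤ) : ZMod 2 :=
  if p.1 ≤ 0 then (ledC p.2 (-p.1).toNat : ZMod 2) else 0

private lemma ledG_rel (p : ℤ × ℤ) :
    ledG p + ledG (p + (1,0)) + ledG (p + (0,1)) = 0 := by
  obtain ⟨a, b⟩ := p
  simp only [ledG, Prod.mk_add_mk, add_zero]
  rcases lt_trichotomy a 0 with h | h | h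
  · have h1 : a ≤ 0 := by omega
    have h2 : a + 1 ≤ 0 := by omega
    have h3 : (-a).toNat = (-(a+1)).toNat + 1 := by omega
    simp only [if_pos h1, if_pos h2, h3]
    rw [ledC_pascal]
    have key : ∀ u v : ZMod 2, u + v + (u + v) = 0 := by decide
    exact key _ _
  · subst h
    norm_num [ledC_zero]
    decide
  · have h1 : ¬ a ≤ 0 := by omega
    have h2 : ¬ a + 1 ≤ 0 := by omega
    simp [if_neg h1, if_neg h2]
    intro h'; exact absurd h' (by omega)

/-- Diagonal (period 3) solutions, with shift `c`. -/
private def ledD (c : ℤ) (p : ℤ × ℤ) : ZMod 2 :=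
  if (3:ℤ) ∣ (p.1 - p.2 + c) then 0 else 1

private lemma ledD_rel (c : ℤ) (p : ℤ × ℤ) :
    ledD c p + ledD c (p + (1,0)) + ledD c (p + (0,1)) = 0 := by
  obtain ⟨a, b⟩ := p
  simp only [ledD, Prod.mk_add_mk, add_zero]
  split_ifs <;> first | decide | omega

private lemma ledG_zero : ledG (0, 0) = 1 := by
  simp [ledG, ledC_zero]

private lemma ledG_pos {a b : ℤ} (h : 1 ≤ a) : ledG (a, b) = 0 := by
  simp only [ledG]
  rw [if_neg (by omega)]

private lemma ledD_one_of_dvd {a b : ℤ} (h : (3:ℤ) ∣ (a - b)) : ledD 1 (a, b) = 1 := by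
  simp only [ledD]
  rw [if_neg (by omega)]

/-- Main combinatorial lemma in `ZMod 2`. -/
private lemma led_main (x : ℤ × ℤ) (hx : x ≠ 0) :
    ∃ G : ℤ × ℤ → ZMod 2,
      (∀ p, G p + G (p + (1,0)) + G (p + (0,1)) = 0) ∧ G (0,0) = 0 ∧ G x = 1 := by
  obtain ⟨m, n⟩ := x
  by_cases hd : (3:ℤ) ∣ (m - n)
  · rcases lt_trichotomy m 0 with hm | hm | hm
    · -- m < 0 : translate of ledG
      refine ⟨fun y => ledG (y.1 - m, y.2 - n), ?_, ?_, ?_⟩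
      · intro p
        obtain ⟨a, c⟩ := p
        show ledG (a - m, c - n) + ledG (a + 1 - m, c + 0 - n)
            + ledG (a + 0 - m, c + 1 - n) = 0
        have := ledG_rel (a - m, c - n)
        simp only [Prod.mk_add_mk, add_zero] at this
        rw [show a + 1 - m = a - m + 1 by ring, show c + 0 - n = c - n by ring,
          show a + 0 - m = a - m by ring, show c + 1 - n = c - n + 1 by ring]
        exact this
      · show ledG ((0:ℤ) - m, (0:ℤ) - n) = 0
        exact ledG_pos (by omega)
      · show ledG (m - m, n - n) = 1
        rw [show m - m = (0:ℤ) by ring, show n - n = (0:ℤ) by ring]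
        exact ledG_zero
    · -- m = 0, so n ≠ 0; use the axis-swapped solution
      subst hm
      have hn : n ≠ 0 := fun h => hx (by simp [h])
      rcases lt_trichotomy n 0 with hn' | hn' | hn'
      · refine ⟨fun y => ledG (y.2 - n, y.1), ?_, ?_, ?_⟩
        · intro p
          obtain ⟨a, c⟩ := p
          show ledG (c - n, a) + ledG (c + 0 - n, a + 1) + ledG (c + 1 - n, a + 0) = 0
          have := ledG_rel (c - n, a)
          simp only [Prod.mk_add_mk, add_zero] at this
          rw [show c + 0 - n = c - n by ring, show c + 1 - n = c - n + 1 by ring,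
            show a + (0:ℤ) = a by ring]
          linear_combination this
        · show ledG ((0:ℤ) - n, (0:ℤ)) = 0
          exact ledG_pos (by omega)
        · show ledG (n - n, (0:ℤ)) = 1
          rw [show n - n = (0:ℤ) by ring]
          exact ledG_zero
      · exact absurd hn' hn
      · -- n > 0 : swapped solution plus shifted diagonal
        refine ⟨fun y => ledG (y.2, y.1) + ledD 1 y, ?_, ?_, ?_⟩
        · intro p
          obtain ⟨a, c⟩ := p
          show ledG (c, a) + ledD 1 (a, c) + (ledG (c + 0, a + 1) + ledD 1 (a + 1, c + 0))
              + (ledG (c + 1, a + 0) + ledD 1 (a + 0, c + 1)) = 0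
          have h1 := ledG_rel (c, a)
          have h2 := ledD_rel 1 (a, c)
          simp only [Prod.mk_add_mk, add_zero] at h1 h2 ⊢
          linear_combination h1 + h2
        · show ledG (0, 0) + ledD 1 ((0:ℤ), (0:ℤ)) = 0
          rw [ledG_zero, ledD_one_of_dvd (by omega)]
          decide
        · show ledG (n, 0) + ledD 1 ((0:ℤ), n) = 1
          rw [ledG_pos (by omega), ledD_one_of_dvd (by omega)]
          decide
    · -- m > 0 : ledG plus shifted diagonal
      refine ⟨fun y => ledG y + ledD 1 y, ?_, ?_, ?_⟩
      · intro p
        show ledG p + ledD 1 p + (ledG (p + (1,0)) + ledD 1 (p + (1,0)))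
            + (ledG (p + (0,1)) + ledD 1 (p + (0,1))) = 0
        have h1 := ledG_rel p
        have h2 := ledD_rel 1 p
        linear_combination h1 + h2
      · show ledG (0, 0) + ledD 1 ((0:ℤ), (0:ℤ)) = 0
        rw [ledG_zero, ledD_one_of_dvd (by omega)]
        decide
      · show ledG (m, n) + ledD 1 (m, n) = 1
        rw [ledG_pos (by omega), ledD_one_of_dvd hd]
        decide
  · -- m - n not divisible by 3 : diagonal solution
    refine ⟨ledD 0, ledD_rel 0, ?_, ?_⟩
    · simp only [ledD]
      rw [if_pos (by omega : (3:ℤ) ∣ ((0:ℤ) - 0 + 0))]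
    · simp only [ledD]
      rw [if_neg (by omega : ¬ (3:ℤ) ∣ (m - n + 0))]

theorem ledrappier_exists_separating (x : ℤ × ℤ) (hx : x ≠ 0) :
    ∃ w ∈ LedrappierSet, w (0, 0) = 1 ∧ w x = -1 := by
  obtain ⟨G, hrel, h0, hx1⟩ := led_main x hx
  refine ⟨fun y => if G y = 0 then 1 else -1, ?_, ?_, ?_⟩
  · intro p
    have h := hrel p
    have hv : ∀ z : ZMod 2, z = 0 ∨ z = 1 := by decide
    rcases hv (G p) with ha | ha <;> rcases hv (G (p + (1,0))) with hb | hb <;>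
      rcases hv (G (p + (0,1))) with hc | hc <;>
      rw [ha, hb, hc] at h <;> simp only [ha, hb, hc] <;>
      first
        | (exact absurd h (by decide))
        | norm_num
  · show (if G (0,0) = 0 then (1:ℤˣ) else -1) = 1
    rw [if_pos h0]
  · show (if G x = 0 then (1:ℤˣ) else -1) = -1
    rw [hx1]
    norm_num
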